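/- For every integer n ≥ 2, the maximal number of runs satisfies a_n = a_{n−2} + 1, where a_0 = 0 and a_1 = 1. -/

import Mathlib

open Finset

/-- The word of a permutation `σ` of `Fin n`: the letter at (0-based) position `i`,
viewed as a natural number (the letters are `0, 1, ..., n-1`, identified with the usual
letters `1, ..., n`); junk value `0` outside the range. -/
def entry {n : ℕ} (σ : Equiv.Perm (Fin n)) (i : ℕ) : ℕ :=
  if h : i < n then (σ ⟨i, h⟩ : ℕ) else 0

/-- Position `i` starts a run of the word `w`: either `i = 0`, or there is a
descent at position `i - 1`. -/
def WordRunStart (w : ℕ → ℕ) (i : ℕ) : Prop :=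
  i = 0 ∨ w i < w (i - 1)

instance (w : ℕ → ℕ) (i : ℕ) : Decidable (WordRunStart w i) :=
  inferInstanceAs (Decidable (i = 0 ∨ w i < w (i - 1)))

/-- The number of runs of the length-`m` word `w` (maximal consecutive increasing subwords). -/
def wordRuns (w : ℕ → ℕ) (m : ℕ) : ℕ :=
  ((Finset.range m).filter fun i => WordRunStart w i).card

/-- The length-`m` word `w` is flattened: the first entries of its runs,
read from left to right, increase. -/
def WordFlattened (w : ℕ → ℕ) (m : ℕ) : Prop :=
  ∀ i < m, ∀ j < m, WordRunStart w i → WordRunStart w j → i < j → w i < w j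

instance (w : ℕ → ℕ) (m : ℕ) : Decidable (WordFlattened w m) :=
  inferInstanceAs (Decidable (∀ i < m, ∀ j < m,
    WordRunStart w i → WordRunStart w j → i < j → w i < w j))

/-- Position `i` (0-based) starts a run of the permutation `σ`. -/
def IsRunStart {n : ℕ} (σ : Equiv.Perm (Fin n)) (i : ℕ) : Prop :=
  i < n ∧ WordRunStart (entry σ) i

instance {n : ℕ} (σ : Equiv.Perm (Fin n)) (i : ℕ) : Decidable (IsRunStart σ i) :=
  inferInstanceAs (Decidable (i < n ∧ WordRunStart (entry σ) i))

/-- The number of runs of the permutation `σ`. -/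
def runCount {n : ℕ} (σ : Equiv.Perm (Fin n)) : ℕ :=
  wordRuns (entry σ) n

/-- `σ` is a flattened partition. -/
def IsFlattened {n : ℕ} (σ : Equiv.Perm (Fin n)) : Prop :=
  WordFlattened (entry σ) n

instance {n : ℕ} (σ : Equiv.Perm (Fin n)) : Decidable (IsFlattened σ) :=
  inferInstanceAs (Decidable (WordFlattened (entry σ) n))

/-- `flatSet n k`: the set `F_{n,k}` of flattened partitions over `[n]` with exactly `k` runs. -/
def flatSet (n k : ℕ) : Finset (Equiv.Perm (Fin n)) :=
  Finset.univ.filter fun σ => IsFlattened σ ∧ runCount σ = k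

/-- `f n k = |F_{n,k}|`, the number of flattened partitions over `[n]` with exactly `k` runs. -/
def f (n k : ℕ) : ℕ := (flatSet n k).card

/-- `a n`: the maximal number of runs of a flattened partition over `[n]` (with `a 0 = 0`,
since the empty permutation has no runs). -/
def a (n : ℕ) : ℕ :=
  (Finset.univ.filter fun σ : Equiv.Perm (Fin n) => IsFlattened σ).sup runCount

/-- Upper bound: a flattened permutation of `Fin n` has at most `(n+1)/2` runs. -/
lemma runCount_le_of_flattened {n : ℕ} (σ : Equiv.Perm (Fin n)) (hf : IsFlattened σ) :
    runCount σ ≤ (n + 1) / 2 := by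
  have : runCount σ ≤ (Finset.range ((n + 1) / 2)).card := by
    rw [runCount, wordRuns]
    apply Finset.card_le_card_of_injOn (fun i => i / 2)
    · intro i hi
      simp only [Finset.mem_coe, Finset.mem_filter, Finset.mem_range] at hi ⊢
      omega
    · intro i hi j hj hij
      simp only [Finset.coe_filter, Set.mem_setOf_eq, Finset.mem_range] at hi hj
      by_contra hne
      dsimp only at hij
      -- wlog i < j; then j = i + 1
      rcases lt_trichotomy i j with h | h | h
      · have hji : j = i + 1 := by omega
        subst hji
        have h1 := hf i hi.1 (i+1) hj.1 hi.2 hj.2 (by omega)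
        rcases hj.2 with h0 | hlt
        · omega
        · simp only [Nat.add_sub_cancel] at hlt; omega
      · exact hne h
      · have hij' : i = j + 1 := by omega
        subst hij'
        have h1 := hf j hj.1 (j+1) hi.1 hj.2 hi.2 (by omega)
        rcases hi.2 with h0 | hlt
        · omega
        · simp only [Nat.add_sub_cancel] at hlt; omega
  simpa using this

/-- The zig-zag permutation achieving the maximum: `0, h, 1, h+1, 2, ...` with `h = (n+1)/2`. -/
def sigMax (n : ℕ) : Equiv.Perm (Fin n) where
  toFun i := ⟨if i.1 % 2 = 0 then i.1 / 2 else (n + 1) / 2 + i.1 / 2, by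
    have := i.2; split <;> omega⟩
  invFun j := ⟨if j.1 < (n + 1) / 2 then 2 * j.1 else 2 * (j.1 - (n + 1) / 2) + 1, by
    have := j.2; split <;> omega⟩
  left_inv i := by
    have := i.2
    apply Fin.ext
    simp only
    split <;> split <;> omega
  right_inv j := by
    have := j.2
    apply Fin.ext
    simp only
    split <;> split <;> omega

lemma entry_sigMax {n : ℕ} {i : ℕ} (hi : i < n) :
    entry (sigMax n) i = if i % 2 = 0 then i / 2 else (n + 1) / 2 + i / 2 := by
  simp only [entry, hi, dif_pos, sigMax, Equiv.coe_fn_mk]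

lemma runStart_sigMax {n : ℕ} {i : ℕ} (hi : i < n) :
    WordRunStart (entry (sigMax n)) i ↔ i % 2 = 0 := by
  rcases Nat.eq_zero_or_pos i with rfl | hpos
  · simp [WordRunStart]
  · have h1 : i - 1 < n := by omega
    rw [WordRunStart, entry_sigMax hi, entry_sigMax h1]
    rcases Nat.even_or_odd i with he | ho
    · have h2 : i % 2 = 0 := Nat.even_iff.mp he
      have h3 : ¬ ((i - 1) % 2 = 0) := by omega
      rw [if_pos h2, if_neg h3]
      omega
    · have h2 : ¬ (i % 2 = 0) := by have := Nat.odd_iff.mp ho; omega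
      have h3 : (i - 1) % 2 = 0 := by have := Nat.odd_iff.mp ho; omega
      rw [if_neg h2, if_pos h3]
      omega

lemma flattened_sigMax (n : ℕ) : IsFlattened (sigMax n) := by
  intro i hi j hj hri hrj hij
  rw [runStart_sigMax hi] at hri
  rw [runStart_sigMax hj] at hrj
  rw [entry_sigMax hi, entry_sigMax hj]
  rw [if_pos hri, if_pos hrj]
  omega

lemma card_even_range (n : ℕ) :
    ((Finset.range n).filter fun i => i % 2 = 0).card = (n + 1) / 2 := by
  induction n with
  | zero => simp
  | succ n ih =>
    rw [Finset.range_add_one, Finset.filter_insert]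
    by_cases h : n % 2 = 0
    · rw [if_pos h, Finset.card_insert_of_notMem (by simp), ih]
      omega
    · rw [if_neg h, ih]
      omega

lemma runCount_sigMax (n : ℕ) : runCount (sigMax n) = (n + 1) / 2 := by
  rw [runCount, wordRuns, ← card_even_range n]
  congr 1
  apply Finset.filter_congr
  intro i hi
  simp only [Finset.mem_range] at hi
  simp [runStart_sigMax hi]

lemma a_eq (n : ℕ) : a n = (n + 1) / 2 := by
  apply le_antisymm
  · apply Finset.sup_le
    intro σ hσ
    simp only [Finset.mem_filter, Finset.mem_univ, true_and] at hσ
    exact runCount_le_of_flattened σ hσ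
  · rw [← runCount_sigMax n]
    apply Finset.le_sup
    simp [flattened_sigMax n]

/-- The maximal number of runs satisfies `a n = a (n - 2) + 1` for every `n ≥ 2`,
with initial conditions `a 0 = 0` and `a 1 = 1`. -/
theorem a_recurrence :
    a 0 = 0 ∧ a 1 = 1 ∧ ∀ n : ℕ, 2 ≤ n → a n = a (n - 2) + 1 := by
  refine ⟨by rw [a_eq], by rw [a_eq], fun n hn => ?_⟩
  rw [a_eq, a_eq]
  omega
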